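/- NC⁰ lower bound for the Parity Halving Problem: let n ≥ 1, and let F : (Fin n → Bool) → (Fin m → Bool) have locality ℓ, meaning that for every output index j there is a set T_j ⊆ Fin n with |T_j| ≤ ℓ such that F(x)(j) depends only on the restriction of x to T_j (i.e., if x and x' agree on T_j then F(x)(j) = F(x')(j)). Then the fraction of even-Hamming-weight strings x : Fin n → Bool for which the Hamming weight of F(x) satisfies |F(x)| ≡ |x|/2 (mod 2) is at most 1/2 + 2^{−n²/(2(n + ℓ²·m))}. -/

import Mathlib

/-- Hamming weight of a Boolean string. -/
def hamming {n : ℕ} (x : Fin n → Bool) : ℕ :=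
  (Finset.univ.filter fun i => x i = true).card


open Finset


lemma caroWei {ι : Type*} [DecidableEq ι] (N : ι → Finset ι)
    (hsym : ∀ i i', i' ∈ N i → i ∈ N i') (hself : ∀ i, i ∈ N i) :
    ∀ V : Finset ι, ∃ S ⊆ V, (∀ i ∈ S, ∀ i' ∈ S, i ≠ i' → i' ∉ N i) ∧
      (∑ i ∈ V, (1 : ℝ) / ((N i ∩ V).card)) ≤ S.card := by
  intro V
  induction V using Finset.strongInduction with
  | _ V ih =>
  rcases V.eq_empty_or_nonempty with rfl | hne
  · exact ⟨∅, Subset.rfl, by simp, by simp⟩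
  obtain ⟨v, hvV, hvmin⟩ := V.exists_min_image (fun i => ((N i ∩ V).card : ℝ)) hne
  set V' := V.filter (fun i => i ∉ N v) with hV'
  have hV'ss : V' ⊂ V := by
    refine Finset.filter_ssubset.2 ⟨v, hvV, by simp [hself v]⟩
  obtain ⟨S', hS'sub, hS'ind, hS'sum⟩ := ih V' hV'ss
  have hvNotV' : v ∉ V' := by simp [hV', hself v]
  have hvNotS' : v ∉ S' := fun h => hvNotV' (hS'sub h)
  refine ⟨insert v S', ?_, ?_, ?_⟩
  · intro i hi
    rcases Finset.mem_insert.1 hi with rfl | hi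
    · exact hvV
    · exact (Finset.filter_subset _ _) (hS'sub hi)
  · intro i hi i' hi' hne'
    rcases Finset.mem_insert.1 hi with hiv | hiS
    · rcases Finset.mem_insert.1 hi' with hiv' | hiS'
      · exact absurd (hiv.trans hiv'.symm) hne'
      · subst hiv; exact (Finset.mem_filter.1 (hS'sub hiS')).2
    · rcases Finset.mem_insert.1 hi' with hiv' | hiS'
      · subst hiv'; exact fun h => (Finset.mem_filter.1 (hS'sub hiS)).2 (hsym _ _ h)
      · exact hS'ind i hiS i' hiS' hne'
  · rw [Finset.card_insert_of_notMem hvNotS']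
    push_cast
    have hsplit : ∑ i ∈ V, (1:ℝ) / ((N i ∩ V).card) =
        (∑ i ∈ V.filter (fun i => i ∈ N v), (1:ℝ) / ((N i ∩ V).card)) +
        ∑ i ∈ V', (1:ℝ) / ((N i ∩ V).card) := (Finset.sum_filter_add_sum_filter_not V _ _).symm
    have hc : (0:ℝ) < ((N v ∩ V).card : ℝ) := by
      have : v ∈ N v ∩ V := Finset.mem_inter.2 ⟨hself v, hvV⟩
      exact_mod_cast Finset.card_pos.2 ⟨v, this⟩
    have h1 : ∑ i ∈ V.filter (fun i => i ∈ N v), (1:ℝ) / ((N i ∩ V).card) ≤ 1 := by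
      calc ∑ i ∈ V.filter (fun i => i ∈ N v), (1:ℝ) / ((N i ∩ V).card)
          ≤ ∑ _i ∈ V.filter (fun i => i ∈ N v), (1:ℝ) / ((N v ∩ V).card) := by
            refine Finset.sum_le_sum fun i hi => ?_
            have := hvmin i (Finset.mem_of_mem_filter i hi)
            exact one_div_le_one_div_of_le hc this
        _ = (V.filter (fun i => i ∈ N v)).card / ((N v ∩ V).card) := by
            rw [Finset.sum_const, nsmul_eq_mul]; ring
        _ ≤ ((N v ∩ V).card : ℝ) / ((N v ∩ V).card) := by
            have hsub : V.filter (fun i => i ∈ N v) ⊆ N v ∩ V := fun i hi =>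
              Finset.mem_inter.2 ⟨(Finset.mem_filter.1 hi).2, Finset.mem_of_mem_filter i hi⟩
            have := Finset.card_le_card hsub
            gcongr
        _ = 1 := div_self hc.ne'
    have h2 : ∑ i ∈ V', (1:ℝ) / ((N i ∩ V).card) ≤ S'.card := by
      refine le_trans (Finset.sum_le_sum fun i hi => ?_) hS'sum
      have hpos : (0:ℝ) < ((N i ∩ V').card : ℝ) := by
        have : i ∈ N i ∩ V' := Finset.mem_inter.2 ⟨hself i, hi⟩
        exact_mod_cast Finset.card_pos.2 ⟨i, this⟩
      apply one_div_le_one_div_of_le hpos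
      exact_mod_cast Finset.card_le_card
        (Finset.inter_subset_inter Finset.Subset.rfl (Finset.filter_subset _ _))
    linarith [hsplit, h1, h2]


lemma single_dep_formula {σ : Type*} [Fintype σ] [DecidableEq σ]
    (f : (σ → Bool) → ℂ) (hpm : ∀ y, f y = 1 ∨ f y = -1)
    (U : Finset σ) (hU : U.card ≤ 1)
    (hdep : ∀ y y', (∀ s ∈ U, y s = y' s) → f y = f y') (y : σ → Bool) :
    f y = f (fun _ => false) *
      ∏ s ∈ Finset.univ.filter (fun s => y s = true),
        (f (fun s' => decide (s' = s)) * f (fun _ => false)) := by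
  set bot : σ → Bool := fun _ => false with hbot
  have hb2 : f bot * f bot = 1 := by rcases hpm bot with h | h <;> rw [h] <;> norm_num
  interval_cases hU' : U.card
  · -- U empty
    have hUe : U = ∅ := Finset.card_eq_zero.1 hU'
    have hconst : ∀ y', f y' = f bot := fun y' => hdep y' bot (by simp [hUe])
    rw [hconst y, Finset.prod_eq_one, mul_one]
    intro s _
    rw [hconst _, hb2]
  · -- U = {t}
    obtain ⟨t, hUt⟩ := Finset.card_eq_one.1 hU'
    have hval : ∀ y', f y' = if y' t = true then f (fun s' => decide (s' = t)) else f bot := by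
      intro y'
      by_cases h : y' t = true
      · rw [if_pos h]
        exact hdep y' _ (by intro s hs; rw [hUt] at hs; simp at hs; subst hs; simp [h])
      · rw [if_neg h]
        refine hdep y' bot ?_
        intro s hs
        rw [hUt] at hs
        simp at hs
        subst hs
        simp [Bool.not_eq_true] at h
        simp [h, hbot]
    have hother : ∀ s, s ≠ t → f (fun s' => decide (s' = s)) = f bot := by
      intro s hst
      rw [hval (fun s' => decide (s' = s))]
      simp [Ne.symm hst]
    by_cases hyt : y t = true
    · have htmem : t ∈ Finset.univ.filter (fun s => y s = true) := by simp [hyt]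
      rw [Finset.prod_eq_single_of_mem t htmem]
      · rw [hval y, if_pos hyt,
          mul_comm (f fun s' => decide (s' = t)) (f bot), ← mul_assoc, hb2, one_mul]
      · intro b _ hbt
        rw [hother b hbt, hb2]
    · rw [Finset.prod_eq_one, mul_one, hval y, if_neg hyt]
      intro s hs
      simp at hs
      have hst : s ≠ t := fun h => hyt (h ▸ hs)
      rw [hother s hst, hb2]

lemma sum_bound {σ : Type*} [Fintype σ] [DecidableEq σ] {m : ℕ}
    (f : Fin m → (σ → Bool) → ℂ)
    (hpm : ∀ j y, f j y = 1 ∨ f j y = -1)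
    (hdep : ∀ j, ∃ U : Finset σ, U.card ≤ 1 ∧
      ∀ y y', (∀ s ∈ U, y s = y' s) → f j y = f j y') :
    norm (∑ y : σ → Bool,
        (∏ j, f j y) * Complex.I ^ (Finset.univ.filter (fun s => y s = true)).card)
      ≤ Real.sqrt 2 ^ (Fintype.card σ) := by
  classical
  set bot : σ → Bool := fun _ => false with hbot
  set h : (σ → Bool) → ℂ := fun y => ∏ j, f j y with hh
  have hpmh : ∀ y, h y = 1 ∨ h y = -1 := by
    intro y
    refine Finset.prod_induction _ (fun c => c = 1 ∨ c = -1) ?_ (Or.inl rfl) (fun j _ => hpm j y)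
    rintro a b (rfl|rfl) (rfl|rfl) <;> norm_num
  set a : σ → ℂ := fun s => h (fun s' => decide (s' = s)) * h bot with ha
  have hha : ∀ s, a s = 1 ∨ a s = -1 := by
    intro s
    rcases hpmh (fun s' => decide (s' = s)) with h1 | h1 <;> rcases hpmh bot with h2 | h2 <;>
      simp [ha, h1, h2]
  have hform : ∀ y, h y = h bot * ∏ s ∈ Finset.univ.filter (fun s => y s = true), a s := by
    intro y
    calc h y = ∏ j, (f j bot * ∏ s ∈ Finset.univ.filter (fun s => y s = true),
          (f j (fun s' => decide (s' = s)) * f j bot)) := by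
          refine Finset.prod_congr rfl fun j _ => ?_
          obtain ⟨U, hU1, hU2⟩ := hdep j
          exact single_dep_formula (f j) (hpm j) U hU1 hU2 y
      _ = (∏ j, f j bot) * ∏ j, ∏ s ∈ Finset.univ.filter (fun s => y s = true),
            (f j (fun s' => decide (s' = s)) * f j bot) := Finset.prod_mul_distrib
      _ = h bot * ∏ s ∈ Finset.univ.filter (fun s => y s = true), a s := by
          rw [Finset.prod_comm]
          refine congrArg _ (Finset.prod_congr rfl fun s _ => ?_)
          rw [Finset.prod_mul_distrib]
  have hsummand : ∀ y : σ → Bool,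
      h y * Complex.I ^ (Finset.univ.filter (fun s => y s = true)).card
        = h bot * ∏ s : σ, (if y s = true then a s * Complex.I else 1) := by
    intro y
    rw [hform y, mul_assoc]
    congr 1
    rw [← Finset.prod_filter (fun s => y s = true) (fun s => a s * Complex.I),
      ← Finset.prod_const Complex.I, ← Finset.prod_mul_distrib]
  have hsum : (∑ y : σ → Bool, ∏ s : σ, (if y s = true then a s * Complex.I else 1))
      = ∏ s : σ, (1 + a s * Complex.I) := by
    rw [← Fintype.prod_sum (fun (s : σ) (b : Bool) => if b = true then a s * Complex.I else 1)]
    refine Finset.prod_congr rfl fun s _ => ?_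
    rw [Fintype.sum_bool]
    simp [add_comm]
  have habs : ∀ s, norm (1 + a s * Complex.I) = Real.sqrt 2 := by
    intro s
    rcases hha s with h1 | h1 <;> rw [h1] <;>
      simp [Complex.norm_def, Complex.normSq_apply] <;> norm_num
  calc norm (∑ y : σ → Bool,
        (∏ j, f j y) * Complex.I ^ (Finset.univ.filter (fun s => y s = true)).card)
      = norm (h bot * ∏ s : σ, (1 + a s * Complex.I)) := by
        rw [← hsum, Finset.mul_sum]
        congr 1
        exact Finset.sum_congr rfl fun y _ => hsummand y
    _ = norm (h bot) * ∏ s : σ, norm (1 + a s * Complex.I) := by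
        rw [norm_mul]
        congr 1
        exact norm_prod _ _
    _ ≤ Real.sqrt 2 ^ (Fintype.card σ) := by
        have hb1 : norm (h bot) = 1 := by
          rcases hpmh bot with h1 | h1 <;> rw [h1] <;> simp
        rw [hb1, one_mul]
        rw [Finset.prod_congr rfl fun s _ => habs s, Finset.prod_const, Finset.card_univ]
lemma prod_pm {ι : Type*} [Fintype ι] (P : ι → Prop) [DecidablePred P] :
    ∏ j, (if P j then (-1 : ℂ) else 1) = (-1) ^ (Finset.univ.filter P).card := by
  rw [Finset.prod_ite, Finset.prod_const, Finset.prod_const, one_pow, mul_one]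

lemma Z_bound {n m : ℕ} (F : (Fin n → Bool) → Fin m → Bool)
    (T : Fin m → Finset (Fin n))
    (hT : ∀ j, ∀ x x' : Fin n → Bool, (∀ i ∈ T j, x i = x' i) → F x j = F x' j)
    (S : Finset (Fin n)) (hS : ∀ j, ((T j ∩ S)).card ≤ 1) :
    norm (∑ x : Fin n → Bool,
        (-1 : ℂ) ^ ((Finset.univ.filter fun j => F x j = true).card) * Complex.I ^ hamming x)
      ≤ (2 : ℝ) ^ (n - S.card) * Real.sqrt 2 ^ S.card := by
  classical
  set p : Fin n → Prop := fun i => i ∈ S with hp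
  set e := (Equiv.piEquivPiSubtypeProd p (fun _ => Bool)) with he
  set g : (Fin n → Bool) → ℂ := fun x =>
    (-1 : ℂ) ^ ((Finset.univ.filter fun j => F x j = true).card) * Complex.I ^ hamming x with hg
  have hsum : ∑ x : Fin n → Bool, g x
      = ∑ q : (∀ i : {x // p x}, Bool) × (∀ i : {x // ¬ p x}, Bool), g (e.symm q) :=
    (Equiv.sum_comp e.symm g).symm
  rw [hsum, Fintype.sum_prod_type]
  -- swap so z outer
  rw [Finset.sum_comm]
  -- hamming splits
  have hham : ∀ (y : ∀ _ : {x // p x}, Bool) (z : ∀ _ : {x // ¬ p x}, Bool),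
      hamming (e.symm (y, z)) =
        (Finset.univ.filter fun s : {x // p x} => y s = true).card +
        (Finset.univ.filter fun s : {x // ¬ p x} => z s = true).card := by
    intro y z
    have h1 : ∀ (σ' : Type) [Fintype σ'] (w : σ' → Bool) [DecidableEq σ'],
        (Finset.univ.filter fun s => w s = true).card = ∑ s : σ', (if w s = true then 1 else 0) := by
      intro σ' _ w _; rw [Finset.card_filter]
    rw [hamming, Finset.card_filter, h1, h1,
      ← Fintype.sum_subtype_add_sum_subtype p (fun i => if (e.symm (y, z)) i = true then 1 else 0)]
    congr 1
    · refine Finset.sum_congr (by congr!) fun s _ => ?_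
      congr 1
      simp [he, Equiv.piEquivPiSubtypeProd_symm_apply, s.2]
    · refine Finset.sum_congr (by congr!) fun s _ => ?_
      congr 1
      simp [he, Equiv.piEquivPiSubtypeProd_symm_apply, s.2]
  have hinner : ∀ z : (∀ _ : {x // ¬ p x}, Bool),
      norm (∑ y : (∀ _ : {x // p x}, Bool), g (e.symm (y, z)))
        ≤ Real.sqrt 2 ^ S.card := by
    intro z
    set f : Fin m → ((∀ _ : {x // p x}, Bool)) → ℂ :=
      fun j y => if F (e.symm (y, z)) j = true then (-1 : ℂ) else 1 with hf
    have hpm : ∀ j y, f j y = 1 ∨ f j y = -1 := by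
      intro j y
      by_cases h : F (e.symm (y, z)) j = true <;> simp [hf, h]
    have hdep : ∀ j, ∃ U : Finset {x // p x}, U.card ≤ 1 ∧
        ∀ y y', (∀ s ∈ U, y s = y' s) → f j y = f j y' := by
      intro j
      refine ⟨Finset.univ.filter (fun s : {x // p x} => (s : Fin n) ∈ T j), ?_, ?_⟩
      · refine le_trans ?_ (hS j)
        refine Finset.card_le_card_of_injOn (fun s => (s : Fin n)) ?_ ?_
        · intro s hs
          simp at hs
          exact Finset.mem_inter.2 ⟨hs, s.2⟩
        · intro s _ s' _ hss'
          exact Subtype.ext hss'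
      · intro y y' hyy'
        have : F (e.symm (y, z)) j = F (e.symm (y', z)) j := by
          refine hT j _ _ fun i hi => ?_
          by_cases h : p i
          · simp only [he, Equiv.piEquivPiSubtypeProd_symm_apply, dif_pos h]
            exact hyy' ⟨i, h⟩ (by simp [hi])
          · simp only [he, Equiv.piEquivPiSubtypeProd_symm_apply, dif_neg h]
        simp [hf, this]
    have hgy : ∀ y, g (e.symm (y, z)) = ((∏ j, f j y) *
        Complex.I ^ (Finset.univ.filter fun s : {x // p x} => y s = true).card) *
        Complex.I ^ (Finset.univ.filter fun s : {x // ¬ p x} => z s = true).card := by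
      intro y
      have hprod : (∏ j, f j y)
          = (-1 : ℂ) ^ ((Finset.univ.filter fun j => F (e.symm (y, z)) j = true).card) :=
        prod_pm _
      rw [hg]
      dsimp only
      rw [hham y z, pow_add, hprod, mul_assoc]
    have hcard : Fintype.card {x // p x} = S.card := Fintype.card_coe S
    calc norm (∑ y : (∀ _ : {x // p x}, Bool), g (e.symm (y, z)))
        = norm ((∑ y : (∀ _ : {x // p x}, Bool), (∏ j, f j y) *
            Complex.I ^ (Finset.univ.filter fun s : {x // p x} => y s = true).card) *
            Complex.I ^ (Finset.univ.filter fun s : {x // ¬ p x} => z s = true).card) := by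
          congr 1
          rw [Finset.sum_mul]
          exact Finset.sum_congr rfl fun y _ => hgy y
      _ = norm (∑ y : (∀ _ : {x // p x}, Bool), (∏ j, f j y) *
            Complex.I ^ (Finset.univ.filter fun s : {x // p x} => y s = true).card) := by
          rw [norm_mul, norm_pow, Complex.norm_I, one_pow, mul_one]
      _ ≤ Real.sqrt 2 ^ (Fintype.card {x // p x}) := sum_bound f hpm hdep
      _ = Real.sqrt 2 ^ S.card := by rw [hcard]
  calc norm (∑ z : (∀ _ : {x // ¬ p x}, Bool),
          ∑ y : (∀ _ : {x // p x}, Bool), g (e.symm (y, z)))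
      ≤ ∑ z : (∀ _ : {x // ¬ p x}, Bool),
          norm (∑ y : (∀ _ : {x // p x}, Bool), g (e.symm (y, z))) :=
        norm_sum_le _ _
    _ ≤ ∑ _z : (∀ _ : {x // ¬ p x}, Bool), Real.sqrt 2 ^ S.card :=
        Finset.sum_le_sum fun z _ => hinner z
    _ = (Fintype.card (∀ _ : {x // ¬ p x}, Bool) : ℝ) * Real.sqrt 2 ^ S.card := by
        rw [Finset.sum_const, Finset.card_univ, nsmul_eq_mul]
    _ = (2 : ℝ) ^ (n - S.card) * Real.sqrt 2 ^ S.card := by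
        have h1 : Fintype.card (∀ _ : {x // ¬ p x}, Bool) = 2 ^ (n - S.card) := by
          rw [Fintype.card_pi, Finset.prod_const, Finset.card_univ, Fintype.card_bool,
            Fintype.card_subtype_compl, Fintype.card_fin, Fintype.card_coe]
        rw [h1]
        push_cast
        ring

lemma find_indep (n m ℓ : ℕ) (hn : 1 ≤ n) (T : Fin m → Finset (Fin n))
    (hTcard : ∀ j, (T j).card ≤ ℓ) :
    ∃ S : Finset (Fin n), (∀ j, (T j ∩ S).card ≤ 1) ∧
      (n : ℝ) ^ 2 ≤ (S.card : ℝ) * ((n : ℝ) + (ℓ : ℝ) ^ 2 * m) := by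
  classical
  set N : Fin n → Finset (Fin n) := fun i =>
    insert i (Finset.univ.biUnion fun j => if i ∈ T j then T j else ∅) with hN
  have hself : ∀ i, i ∈ N i := fun i => Finset.mem_insert_self i _
  have hsym : ∀ i i', i' ∈ N i → i ∈ N i' := by
    intro i i' h
    rcases Finset.mem_insert.1 h with rfl | h
    · exact hself _
    · obtain ⟨j, _, hj⟩ := Finset.mem_biUnion.1 h
      by_cases hij : i ∈ T j
      · rw [if_pos hij] at hj
        refine Finset.mem_insert_of_mem (Finset.mem_biUnion.2 ⟨j, Finset.mem_univ j, ?_⟩)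
        rw [if_pos hj]
        exact hij
      · rw [if_neg hij] at hj
        exact absurd hj (Finset.notMem_empty _)
  obtain ⟨S, _, hind, hsum⟩ := caroWei N hsym hself Finset.univ
  refine ⟨S, ?_, ?_⟩
  · intro j
    rw [Finset.card_le_one]
    intro a ha b hb
    by_contra hab
    have haT := (Finset.mem_inter.1 ha).1
    have haS := (Finset.mem_inter.1 ha).2
    have hbT := (Finset.mem_inter.1 hb).1
    have hbS := (Finset.mem_inter.1 hb).2
    refine hind a haS b hbS hab ?_
    refine Finset.mem_insert_of_mem (Finset.mem_biUnion.2 ⟨j, Finset.mem_univ j, ?_⟩)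
    rw [if_pos haT]
    exact hbT
  · -- degree sum bound
    have hNcard : ∀ i, (N i).card ≤ 1 + ∑ j, (if i ∈ T j then (T j).card else 0) := by
      intro i
      refine le_trans (Finset.card_insert_le _ _) ?_
      rw [add_comm]
      refine Nat.add_le_add_left ?_ 1
      refine le_trans (Finset.card_biUnion_le) (Finset.sum_le_sum fun j _ => ?_)
      by_cases h : i ∈ T j <;> simp [h]
    have hdeg : ∑ i, (N i).card ≤ n + ℓ ^ 2 * m := by
      calc ∑ i, (N i).card ≤ ∑ i : Fin n, (1 + ∑ j, (if i ∈ T j then (T j).card else 0)) :=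
            Finset.sum_le_sum fun i _ => hNcard i
        _ = n + ∑ j, ∑ i : Fin n, (if i ∈ T j then (T j).card else 0) := by
            rw [Finset.sum_add_distrib, Finset.sum_const, Finset.card_univ, Fintype.card_fin,
              smul_eq_mul, mul_one, Finset.sum_comm]
        _ ≤ n + ℓ ^ 2 * m := by
            refine Nat.add_le_add_left ?_ n
            calc ∑ j, ∑ i : Fin n, (if i ∈ T j then (T j).card else 0)
                ≤ ∑ _j : Fin m, ℓ ^ 2 := by
                  refine Finset.sum_le_sum fun j _ => ?_
                  rw [Finset.sum_ite_mem, Finset.univ_inter, Finset.sum_const, smul_eq_mul, sq]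
                  exact Nat.mul_le_mul (hTcard j) (hTcard j)
              _ = ℓ ^ 2 * m := by rw [Finset.sum_const, Finset.card_univ, Fintype.card_fin,
                  smul_eq_mul, mul_comm]
    -- Cauchy-Schwarz (Sedrakyan)
    have hpos : ∀ i : Fin n, (0 : ℝ) < ((N i).card : ℝ) := by
      intro i
      exact_mod_cast Finset.card_pos.2 ⟨i, hself i⟩
    have hcs : ((n : ℝ)) ^ 2 / (∑ i, ((N i).card : ℝ)) ≤ ∑ i, (1 : ℝ) / ((N i).card) := by
      have := Finset.sq_sum_div_le_sum_sq_div Finset.univ (fun _ : Fin n => (1 : ℝ))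
        (g := fun i => ((N i).card : ℝ)) (fun i _ => hpos i)
      simpa using this
    have hdsum : (0 : ℝ) < ∑ i, ((N i).card : ℝ) :=
      Finset.sum_pos (fun i _ => hpos i) ⟨⟨0, hn⟩, Finset.mem_univ _⟩
    have h1 : ((n : ℝ)) ^ 2 ≤ (S.card : ℝ) * ∑ i, ((N i).card : ℝ) := by
      rw [div_le_iff₀ hdsum] at hcs
      refine le_trans hcs (mul_le_mul_of_nonneg_right ?_ hdsum.le)
      simpa using hsum
    refine le_trans h1 (mul_le_mul_of_nonneg_left ?_ (Nat.cast_nonneg _))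
    calc ∑ i, ((N i).card : ℝ) ≤ ((n + ℓ ^ 2 * m : ℕ) : ℝ) := by exact_mod_cast hdeg
      _ = (n : ℝ) + (ℓ : ℝ) ^ 2 * m := by push_cast; ring

lemma neg_one_pow_hamming {n : ℕ} (x : Fin n → Bool) :
    (-1 : ℝ) ^ hamming x = ∏ i, (if x i = true then (-1 : ℝ) else 1) := by
  rw [hamming, Finset.card_filter, ← Finset.prod_pow_eq_pow_sum]
  refine Finset.prod_congr rfl fun i _ => ?_
  by_cases h : x i = true <;> simp [h]

lemma even_card (n : ℕ) (hn : 1 ≤ n) :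
    (Finset.univ.filter fun x : Fin n → Bool => Even (hamming x)).card = 2 ^ (n - 1) := by
  classical
  have hzero : ∑ x : Fin n → Bool, (-1 : ℝ) ^ hamming x = 0 := by
    calc ∑ x : Fin n → Bool, (-1 : ℝ) ^ hamming x
        = ∑ x : Fin n → Bool, ∏ i, (if x i = true then (-1 : ℝ) else 1) :=
          Finset.sum_congr rfl fun x _ => neg_one_pow_hamming x
      _ = ∏ i : Fin n, ∑ b : Bool, (if b = true then (-1 : ℝ) else 1) :=
          (Fintype.prod_sum (fun (i : Fin n) (b : Bool) => if b = true then (-1 : ℝ) else 1)).symm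
      _ = 0 := by
          refine Finset.prod_eq_zero (Finset.mem_univ (⟨0, hn⟩ : Fin n)) ?_
          rw [Fintype.sum_bool]
          norm_num
  set E := Finset.univ.filter fun x : Fin n → Bool => Even (hamming x) with hE
  set O := Finset.univ.filter (fun x : Fin n → Bool => ¬ Even (hamming x)) with hO
  have hsplit : ∑ x : Fin n → Bool, (-1 : ℝ) ^ hamming x
      = ∑ x ∈ E, (-1 : ℝ) ^ hamming x + ∑ x ∈ O, (-1 : ℝ) ^ hamming x :=
    (Finset.sum_filter_add_sum_filter_not _ _ _).symm
  have hEsum : ∑ x ∈ E, (-1 : ℝ) ^ hamming x = E.card := by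
    rw [Finset.sum_congr rfl fun x hx => (Finset.mem_filter.1 hx).2.neg_one_pow]
    rw [Finset.sum_const, nsmul_eq_mul, mul_one]
  have hOsum : ∑ x ∈ O, (-1 : ℝ) ^ hamming x = -O.card := by
    have : ∀ x ∈ O, (-1 : ℝ) ^ hamming x = -1 := fun x hx =>
      (Nat.not_even_iff_odd.1 (Finset.mem_filter.1 hx).2).neg_one_pow
    rw [Finset.sum_congr rfl this, Finset.sum_const, nsmul_eq_mul]
    ring
  have hEO : (E.card : ℝ) = O.card := by
    rw [hsplit, hEsum, hOsum] at hzero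
    linarith
  have hEOn : E.card = O.card := by exact_mod_cast hEO
  have htot : E.card + O.card = 2 ^ n := by
    rw [hE, hO, Finset.card_filter_add_card_filter_not, Finset.card_univ]
    simp [Fintype.card_fun]
  have h2n : 2 ^ n = 2 * 2 ^ (n - 1) := by
    conv_lhs => rw [show n = (n - 1) + 1 by omega]
    rw [pow_succ]
    ring
  omega

lemma re_eq {n m : ℕ} (F : (Fin n → Bool) → Fin m → Bool) :
    (∑ x : Fin n → Bool,
        (-1 : ℂ) ^ ((Finset.univ.filter fun j => F x j = true).card) * Complex.I ^ hamming x).re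
      = 2 * ((Finset.univ.filter fun x : Fin n → Bool =>
          Even (hamming x) ∧
          (Finset.univ.filter fun j => F x j = true).card % 2 = (hamming x / 2) % 2).card : ℝ)
        - ((Finset.univ.filter fun x : Fin n → Bool => Even (hamming x)).card : ℝ) := by
  classical
  rw [Complex.re_sum]
  have hterm : ∀ x : Fin n → Bool,
      ((-1 : ℂ) ^ ((Finset.univ.filter fun j => F x j = true).card) * Complex.I ^ hamming x).re
        = if Even (hamming x) then
            ((-1 : ℝ) ^ ((Finset.univ.filter fun j => F x j = true).card) *
              (-1 : ℝ) ^ (hamming x / 2)) else 0 := by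
    intro x
    set c := (Finset.univ.filter fun j => F x j = true).card with hc
    set h := hamming x with hh
    by_cases he : Even h
    · rw [if_pos he]
      have h2 : h = 2 * (h / 2) := (Nat.two_mul_div_two_of_even he).symm
      have hI : Complex.I ^ h = ((-1 : ℝ) ^ (h / 2) : ℝ) := by
        calc Complex.I ^ h = (Complex.I ^ 2) ^ (h / 2) := by rw [← pow_mul, ← h2]
          _ = ((-1 : ℝ) ^ (h / 2) : ℝ) := by rw [Complex.I_sq]; push_cast; ring
      rw [hI]
      have hneg : (-1 : ℂ) ^ c = ((-1 : ℝ) ^ c : ℝ) := by push_cast; ring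
      rw [hneg, ← Complex.ofReal_mul, Complex.ofReal_re]
    · rw [if_neg he]
      have h2 : h = 2 * (h / 2) + 1 := by
        rcases Nat.even_or_odd h with h' | h'
        · exact absurd h' he
        · rw [Nat.odd_iff] at h'; omega
      have hI : Complex.I ^ h = ((-1 : ℝ) ^ (h / 2) : ℝ) * Complex.I := by
        calc Complex.I ^ h = (Complex.I ^ 2) ^ (h / 2) * Complex.I := by
              rw [← pow_mul, ← pow_succ, ← h2]
          _ = ((-1 : ℝ) ^ (h / 2) : ℝ) * Complex.I := by rw [Complex.I_sq]; push_cast; ring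
      rw [hI]
      rcases Nat.even_or_odd c with hc' | hc' <;> rcases Nat.even_or_odd (h / 2) with hd' | hd' <;>
        simp [hc'.neg_one_pow, hd'.neg_one_pow, Complex.mul_re]
  rw [Finset.sum_congr rfl fun x _ => hterm x]
  rw [← Finset.sum_filter]
  have hpm : ∀ x ∈ (Finset.univ.filter fun x : Fin n → Bool => Even (hamming x)),
      ((-1 : ℝ) ^ ((Finset.univ.filter fun j => F x j = true).card) *
          (-1 : ℝ) ^ (hamming x / 2))
        = if (Finset.univ.filter fun j => F x j = true).card % 2 = (hamming x / 2) % 2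
            then (1 : ℝ) else -1 := by
    intro x _
    set c := (Finset.univ.filter fun j => F x j = true).card
    set d := hamming x / 2
    rcases Nat.even_or_odd c with hc | hc <;> rcases Nat.even_or_odd d with hd | hd
    · rw [hc.neg_one_pow, hd.neg_one_pow, if_pos]
      · norm_num
      · rw [Nat.even_iff] at hc hd; omega
    · rw [hc.neg_one_pow, hd.neg_one_pow, if_neg]
      · norm_num
      · rw [Nat.even_iff] at hc; rw [Nat.odd_iff] at hd; omega
    · rw [hc.neg_one_pow, hd.neg_one_pow, if_neg]
      · norm_num
      · rw [Nat.odd_iff] at hc; rw [Nat.even_iff] at hd; omega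
    · rw [hc.neg_one_pow, hd.neg_one_pow, if_pos]
      · norm_num
      · rw [Nat.odd_iff] at hc hd; omega
  rw [Finset.sum_congr rfl hpm, Finset.sum_ite, Finset.sum_const, Finset.sum_const,
    Finset.filter_filter, Finset.filter_filter]
  rw [nsmul_eq_mul, nsmul_eq_mul, mul_one]
  have hcards : (Finset.univ.filter fun x : Fin n → Bool => Even (hamming x) ∧
        ¬ ((Finset.univ.filter fun j => F x j = true).card % 2 = (hamming x / 2) % 2)).card
      = (Finset.univ.filter fun x : Fin n → Bool => Even (hamming x)).card
        - (Finset.univ.filter fun x : Fin n → Bool => Even (hamming x) ∧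
            (Finset.univ.filter fun j => F x j = true).card % 2 = (hamming x / 2) % 2).card := by
    rw [← Finset.filter_filter, ← Finset.filter_filter,
      Finset.filter_not, Finset.card_sdiff_of_subset (Finset.filter_subset _ _)]
  rw [hcards]
  have hle : (Finset.univ.filter fun x : Fin n → Bool => Even (hamming x) ∧
        (Finset.univ.filter fun j => F x j = true).card % 2 = (hamming x / 2) % 2).card
      ≤ (Finset.univ.filter fun x : Fin n → Bool => Even (hamming x)).card := by
    rw [← Finset.filter_filter]
    exact Finset.card_le_card (Finset.filter_subset _ _)
  push_cast [Nat.cast_sub hle]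
  ring


/-- NC⁰ lower bound for the Parity Halving Problem: if every output bit of
`F : {0,1}^n → {0,1}^m` depends on at most `ℓ` input bits, then `F` solves the
Parity Halving Problem on a random even-parity input with probability at most
`1/2 + 2^{−n²/(2(n + ℓ²·m))}`. -/
theorem php_not_in_NC0 (n m ℓ : ℕ) (hn : 1 ≤ n)
    (F : (Fin n → Bool) → Fin m → Bool)
    (hF : ∀ j : Fin m, ∃ T : Finset (Fin n), T.card ≤ ℓ ∧
      ∀ x x' : Fin n → Bool, (∀ i ∈ T, x i = x' i) → F x j = F x' j) :
    ((Finset.univ.filter fun x : Fin n → Bool =>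
        Even (hamming x) ∧
        (Finset.univ.filter fun j => F x j = true).card % 2 = (hamming x / 2) % 2).card : ℝ) /
      ((Finset.univ.filter fun x : Fin n → Bool => Even (hamming x)).card : ℝ)
      ≤ 1 / 2 + (2 : ℝ) ^ (-((n : ℝ) ^ 2 / (2 * ((n : ℝ) + (ℓ : ℝ) ^ 2 * (m : ℝ))))) := by
  classical
  choose T hT1 hT2 using hF
  obtain ⟨S, hSind, hSsize⟩ := find_indep n m ℓ hn T hT1
  set k := S.card with hk
  have hkn : k ≤ n := by
    have := Finset.card_le_univ S
    simpa using this
  set A : ℝ := ((Finset.univ.filter fun x : Fin n → Bool =>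
      Even (hamming x) ∧
      (Finset.univ.filter fun j => F x j = true).card % 2 = (hamming x / 2) % 2).card : ℝ) with hA
  have hre := re_eq F
  have hZb := Z_bound F T hT2 S hSind
  have hre_le := Complex.re_le_norm (∑ x : Fin n → Bool,
      (-1 : ℂ) ^ ((Finset.univ.filter fun j => F x j = true).card) * Complex.I ^ hamming x)
  have hEcard := even_card n hn
  rw [hEcard]
  set Ec : ℝ := ((2 ^ (n - 1) : ℕ) : ℝ) with hEc
  have hEcpos : (0 : ℝ) < Ec := by positivity
  have h2n : ((2 : ℝ)) ^ n = 2 * Ec := by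
    rw [hEc]
    push_cast
    conv_lhs => rw [show n = (n - 1) + 1 by omega]
    rw [pow_succ]
    ring
  -- convert the power bound to rpow
  have hsqrt : Real.sqrt 2 ^ k = (2 : ℝ) ^ ((k : ℝ) / 2) := by
    rw [Real.sqrt_eq_rpow, ← Real.rpow_natCast ((2 : ℝ) ^ ((1 : ℝ) / 2)) k,
      ← Real.rpow_mul (by norm_num)]
    congr 1
    ring
  have hpow : (2 : ℝ) ^ (n - k) * Real.sqrt 2 ^ k = (2 : ℝ) ^ n * (2 : ℝ) ^ (-((k : ℝ) / 2)) := by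
    rw [hsqrt, ← Real.rpow_natCast (2 : ℝ) (n - k), ← Real.rpow_natCast (2 : ℝ) n,
      ← Real.rpow_add (by norm_num), ← Real.rpow_add (by norm_num)]
    congr 1
    rw [Nat.cast_sub hkn]
    ring
  have hn' : (1 : ℝ) ≤ (n : ℝ) := by exact_mod_cast hn
  have hlm : (0 : ℝ) ≤ (ℓ : ℝ) ^ 2 * m := by positivity
  have hc : (0 : ℝ) < (n : ℝ) + (ℓ : ℝ) ^ 2 * m := by linarith
  have hexp : (n : ℝ) ^ 2 / (2 * ((n : ℝ) + (ℓ : ℝ) ^ 2 * m)) ≤ (k : ℝ) / 2 := by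
    rw [div_le_div_iff₀ (by linarith) (by norm_num)]
    nlinarith [hSsize]
  have hmono : (2 : ℝ) ^ (-((k : ℝ) / 2))
      ≤ (2 : ℝ) ^ (-((n : ℝ) ^ 2 / (2 * ((n : ℝ) + (ℓ : ℝ) ^ 2 * (m : ℝ))))) :=
    Real.rpow_le_rpow_of_exponent_le (by norm_num) (by linarith)
  set B : ℝ := (2 : ℝ) ^ (-((n : ℝ) ^ 2 / (2 * ((n : ℝ) + (ℓ : ℝ) ^ 2 * (m : ℝ))))) with hB
  have hBpos : (0 : ℝ) ≤ B := Real.rpow_nonneg (by norm_num) _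
  have hkey : 2 * A - Ec ≤ (2 : ℝ) ^ n * B := by
    have h1 : 2 * A - Ec ≤ norm (∑ x : Fin n → Bool,
        (-1 : ℂ) ^ ((Finset.univ.filter fun j => F x j = true).card) * Complex.I ^ hamming x) := by
      rw [← hA, hEcard] at hre
      rw [hre] at hre_le
      exact_mod_cast hre_le
    have h2 : (2 : ℝ) ^ (n - k) * Real.sqrt 2 ^ k ≤ (2 : ℝ) ^ n * B := by
      rw [hpow]
      exact mul_le_mul_of_nonneg_left hmono (by positivity)
    exact h1.trans (hZb.trans h2)
  rw [div_le_iff₀ hEcpos]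
  rw [h2n] at hkey
  nlinarith [hkey, hEcpos, hBpos]
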